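/- Let n, m, j be positive integers. The number of free (n,m)-paths with exactly j peaks that begin with an up step U and end with a down step D equals binomial(n−1, j−1)·binomial(m−1, j−1). -/

import Mathlib

def IsFreePath (n m : ℕ) (w : List Bool) : Prop :=
  w.count true = m ∧ w.count false = n

def IsPeakAt (w : List Bool) (i : ℕ) : Prop :=
  [true, false] <+: w.drop i

noncomputable def numPeaks (w : List Bool) : ℕ :=
  {i : ℕ | IsPeakAt w i}.ncard

lemma peakSet_subset (w : List Bool) : {i | IsPeakAt w i} ⊆ Set.Iio w.length := by
  intro i hi
  have h := hi.length_le
  simp only [List.length_drop, List.length_cons, List.length_singleton] at h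
  simp only [Set.mem_Iio]
  omega

lemma peakSet_finite (w : List Bool) : {i | IsPeakAt w i}.Finite :=
  (Set.finite_Iio _).subset (peakSet_subset w)

lemma isPeakAt_succ (b : Bool) (v : List Bool) (i : ℕ) :
    IsPeakAt (b :: v) (i + 1) ↔ IsPeakAt v i := by
  simp [IsPeakAt]

lemma isPeakAt_zero (b : Bool) (v : List Bool) :
    IsPeakAt (b :: v) 0 ↔ b = true ∧ v.head? = some false := by
  cases v with
  | nil =>
      simp only [IsPeakAt, List.drop_zero]
      constructor
      · intro h; exact absurd (List.IsPrefix.length_le h) (by simp)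
      · rintro ⟨_, h⟩; simp at h
  | cons c t => constructor
                · intro h
                  rcases h with ⟨s, hs⟩
                  simp at hs
                  simp [hs.1, hs.2.1]
                · rintro ⟨rfl, hc⟩
                  simp at hc
                  subst hc
                  exact ⟨t, by simp [IsPeakAt]⟩

lemma numPeaks_cons (b : Bool) (v : List Bool) :
    numPeaks (b :: v) = numPeaks v + (if b = true ∧ v.head? = some false then 1 else 0) := by
  have himg : {i | IsPeakAt v i}.ncard = ((· + 1) '' {i | IsPeakAt v i}).ncard :=
    (Set.ncard_image_of_injective _ (add_left_injective 1)).symm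
  by_cases hp : b = true ∧ v.head? = some false
  · have hset : {i | IsPeakAt (b :: v) i} = insert 0 ((· + 1) '' {i | IsPeakAt v i}) := by
      ext i
      cases i with
      | zero => simp [isPeakAt_zero, hp]
      | succ i => simp [isPeakAt_succ]
    rw [numPeaks, numPeaks, hset, Set.ncard_insert_of_notMem (by simp)
      (((peakSet_finite v).image _))]
    simp [← himg, hp]
  · have hset : {i | IsPeakAt (b :: v) i} = (· + 1) '' {i | IsPeakAt v i} := by
      ext i
      cases i with
      | zero => simp [isPeakAt_zero, hp]
      | succ i => simp [isPeakAt_succ]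
    rw [numPeaks, numPeaks, hset, ← himg]
    simp [hp]

lemma numPeaks_nil : numPeaks [] = 0 := by
  have : {i | IsPeakAt ([] : List Bool) i} = ∅ := by
    ext i
    simp only [Set.mem_setOf_eq, Set.mem_empty_iff_false, iff_false]
    intro h
    have := List.IsPrefix.length_le h
    simp at this
  simp [numPeaks, this]

lemma numPeaks_eq_zero_of_no_true (w : List Bool) (h : w.count true = 0) : numPeaks w = 0 := by
  have : {i | IsPeakAt w i} = ∅ := by
    ext i
    simp only [Set.mem_setOf_eq, Set.mem_empty_iff_false, iff_false]
    intro hp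
    have : true ∈ w := List.mem_of_mem_drop (hp.subset (by simp))
    rw [List.count_eq_zero] at h
    exact h this
  simp [numPeaks, this]

lemma count_false_eq_zero_of (w : List Bool) (h0 : numPeaks w = 0)
    (hh : w.head? = some true) : w.count false = 0 := by
  induction w with
  | nil => simp
  | cons b v ih =>
    have hb : b = true := by simpa using hh
    subst hb
    rw [numPeaks_cons] at h0
    by_cases hp : v.head? = some false
    · simp [hp] at h0
    · cases v with
      | nil => simp
      | cons c t =>
        have hc : c = true := by
          cases c
          · simp at hp
          · rfl
        subst hc
        simp only [hp, and_false, if_neg, ite_false] at h0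
        simp only [if_neg (by simp : ¬(true = true ∧ (true :: t).head? = some false)), add_zero] at h0
        have := ih h0 (by simp)
        simpa using this
def eS (n m j : ℕ) : Set (List Bool) :=
  {w | IsFreePath n m w ∧ numPeaks w = j ∧ w.head? = some true ∧ w.getLast? = some false}

def fS (n m j : ℕ) : Set (List Bool) :=
  {w | IsFreePath n m w ∧ numPeaks w = j ∧ w.head? = some false ∧ w.getLast? = some false}

lemma finite_length_eq (k : ℕ) : {w : List Bool | w.length = k}.Finite := by
  induction k with
  | zero =>
    have : {w : List Bool | w.length = 0} = {[]} := by
      ext w; simp [List.length_eq_zero_iff]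
    rw [this]; exact Set.finite_singleton _
  | succ k ih =>
    have : {w : List Bool | w.length = k + 1} =
        Set.image2 List.cons Set.univ {w | w.length = k} := by
      ext w
      cases w with
      | nil => simp
      | cons b v =>
        simp only [Set.mem_setOf_eq, List.length_cons, Set.mem_image2, Set.mem_univ, true_and]
        constructor
        · intro h; exact ⟨b, v, by omega, rfl⟩
        · rintro ⟨a, l, hl, h⟩
          obtain ⟨rfl, rfl⟩ := List.cons.injEq a l b v ▸ h
          omega
    rw [this]
    exact Set.Finite.image2 _ Set.finite_univ ih

lemma length_eq_counts (w : List Bool) : w.length = w.count true + w.count false := by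
  induction w with
  | nil => simp
  | cons b v ih =>
    cases b <;> simp only [List.count_cons, List.length_cons, ih] <;> simp <;> omega

lemma eS_finite (n m j : ℕ) : (eS n m j).Finite := by
  apply (finite_length_eq (m + n)).subset
  rintro w ⟨⟨h1, h2⟩, -⟩
  simp [length_eq_counts w, h1, h2]

lemma fS_finite (n m j : ℕ) : (fS n m j).Finite := by
  apply (finite_length_eq (m + n)).subset
  rintro w ⟨⟨h1, h2⟩, -⟩
  simp [length_eq_counts w, h1, h2]

lemma head_mem_count {w : List Bool} {b : Bool} (h : w.head? = some b) : 1 ≤ w.count b := by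
  cases w with
  | nil => simp at h
  | cons c v =>
    have : c = b := by simpa using h
    subst this
    simp [List.count_cons]

lemma last_mem_count {w : List Bool} {b : Bool} (h : w.getLast? = some b) : 1 ≤ w.count b := by
  have hne : w ≠ [] := by rintro rfl; simp at h
  have hmem : b ∈ w := by
    rw [List.getLast?_eq_getLast hne, Option.some_inj] at h
    rw [← h]
    exact List.getLast_mem hne
  exact List.one_le_count_iff.mpr hmem

lemma eS_empty_m0 (n j : ℕ) : eS n 0 j = ∅ := by
  ext w
  simp only [eS, Set.mem_setOf_eq, Set.mem_empty_iff_false, iff_false]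
  rintro ⟨⟨h1, -⟩, -, hh, -⟩
  have := head_mem_count hh
  omega

lemma eS_empty_n0 (m j : ℕ) : eS 0 m j = ∅ := by
  ext w
  simp only [eS, Set.mem_setOf_eq, Set.mem_empty_iff_false, iff_false]
  rintro ⟨⟨-, h2⟩, -, -, hl⟩
  have := last_mem_count hl
  omega

lemma fS_empty_n0 (m j : ℕ) : fS 0 m j = ∅ := by
  ext w
  simp only [fS, Set.mem_setOf_eq, Set.mem_empty_iff_false, iff_false]
  rintro ⟨⟨-, h2⟩, -, hh, -⟩
  have := head_mem_count hh
  omega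

lemma eS_empty_j0 (n m : ℕ) (hn : 1 ≤ n) : eS n m 0 = ∅ := by
  ext w
  simp only [eS, Set.mem_setOf_eq, Set.mem_empty_iff_false, iff_false]
  rintro ⟨⟨-, h2⟩, hp, hh, -⟩
  have := count_false_eq_zero_of w hp hh
  omega

lemma fS_m0_j0 (n : ℕ) (hn : 1 ≤ n) : fS n 0 0 = {List.replicate n false} := by
  ext w
  simp only [fS, Set.mem_setOf_eq, Set.mem_singleton_iff]
  constructor
  · rintro ⟨⟨h1, h2⟩, -, -, -⟩
    rw [List.eq_replicate_iff]
    refine ⟨by rw [length_eq_counts w, h1, h2]; simp, ?_⟩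
    intro b hb
    cases b
    · rfl
    · rw [List.count_eq_zero] at h1; exact absurd hb h1
  · rintro rfl
    obtain ⟨k, rfl⟩ : ∃ k, n = k + 1 := ⟨n - 1, by omega⟩
    refine ⟨⟨by simp [List.count_replicate], by simp [List.count_replicate]⟩, numPeaks_eq_zero_of_no_true _ (by simp [List.count_replicate]), ?_, ?_⟩
    · rw [List.replicate_succ]; rfl
    · rw [List.getLast?_eq_getLast (l := List.replicate (k+1) false) (by simp)]
      congr 1
      have := List.getLast_mem (l := List.replicate (k+1) false) (by simp)
      simpa using this

lemma fS_m0_jpos (n j : ℕ) (hj : 1 ≤ j) : fS n 0 j = ∅ := by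
  ext w
  simp only [fS, Set.mem_setOf_eq, Set.mem_empty_iff_false, iff_false]
  rintro ⟨⟨h1, -⟩, hp, -, -⟩
  have := numPeaks_eq_zero_of_no_true w h1
  omega
lemma getLast?_cons_of_ne_nil {b : Bool} {v : List Bool} (h : v ≠ []) :
    (b :: v).getLast? = v.getLast? := by
  cases v with
  | nil => exact absurd rfl h
  | cons c t => exact List.getLast?_cons_cons

lemma eS_eq (n m j : ℕ) (hn : 1 ≤ n) (hm : 1 ≤ m) (hj : 1 ≤ j) :
    eS n m j = (true :: ·) '' (eS n (m - 1) j ∪ fS n (m - 1) (j - 1)) := by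
  ext w
  constructor
  · rintro ⟨⟨h1, h2⟩, hp, hh, hl⟩
    cases w with
    | nil => simp at hh
    | cons b v =>
      have hb : b = true := by simpa using hh
      subst hb
      have hvne : v ≠ [] := by
        rintro rfl
        simp at hl
      have hc1 : v.count true = m - 1 := by
        have : List.count true (true :: v) = v.count true + 1 := by simp [List.count_cons]
        omega
      have hc2 : v.count false = n := by
        have : List.count false (true :: v) = v.count false := by simp [List.count_cons]
        omega
      have hlv : v.getLast? = some false := by rwa [getLast?_cons_of_ne_nil hvne] at hl
      rw [numPeaks_cons] at hp
      cases v with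
      | nil => exact absurd rfl hvne
      | cons c t =>
        cases c with
        | true =>
          refine ⟨true :: t, Or.inl ⟨⟨hc1, hc2⟩, ?_, by simp, hlv⟩, rfl⟩
          simp at hp
          omega
        | false =>
          refine ⟨false :: t, Or.inr ⟨⟨hc1, hc2⟩, ?_, by simp, hlv⟩, rfl⟩
          simp at hp
          omega
  · rintro ⟨v, hv, rfl⟩
    rcases hv with ⟨⟨h1, h2⟩, hp, hh, hl⟩ | ⟨⟨h1, h2⟩, hp, hh, hl⟩ <;>
      have hvne : v ≠ [] := by rintro rfl; simp at hh
    · refine ⟨⟨?_, ?_⟩, ?_, rfl, by rwa [getLast?_cons_of_ne_nil hvne]⟩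
      · simp [List.count_cons, h1]; omega
      · simp [List.count_cons, h2]
      · rw [numPeaks_cons, hh]
        simp [hp]
    · refine ⟨⟨?_, ?_⟩, ?_, rfl, by rwa [getLast?_cons_of_ne_nil hvne]⟩
      · simp [List.count_cons, h1]; omega
      · simp [List.count_cons, h2]
      · rw [numPeaks_cons, hh]
        simp [hp]
        omega

lemma fS_eq (n m j : ℕ) (hn : 1 ≤ n) (h2 : 2 ≤ n ∨ 1 ≤ m) :
    fS n m j = (false :: ·) '' (eS (n - 1) m j ∪ fS (n - 1) m j) := by
  ext w
  constructor
  · rintro ⟨⟨h1, h2'⟩, hp, hh, hl⟩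
    cases w with
    | nil => simp at hh
    | cons b v =>
      have hb : b = false := by simpa using hh
      subst hb
      have hvne : v ≠ [] := by
        rintro rfl
        simp [List.count_cons] at h1 h2'
        omega
      have hc1 : v.count true = m := by
        have : List.count true (false :: v) = v.count true := by simp [List.count_cons]
        omega
      have hc2 : v.count false = n - 1 := by
        have : List.count false (false :: v) = v.count false + 1 := by simp [List.count_cons]
        omega
      have hlv : v.getLast? = some false := by rwa [getLast?_cons_of_ne_nil hvne] at hl
      have hpv : numPeaks v = j := by
        rw [numPeaks_cons] at hp
        simp at hp
        omega
      cases v with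
      | nil => exact absurd rfl hvne
      | cons c t =>
        cases c with
        | true => exact ⟨true :: t, Or.inl ⟨⟨hc1, hc2⟩, hpv, by simp, hlv⟩, rfl⟩
        | false => exact ⟨false :: t, Or.inr ⟨⟨hc1, hc2⟩, hpv, by simp, hlv⟩, rfl⟩
  · rintro ⟨v, hv, rfl⟩
    rcases hv with ⟨⟨h1, h2'⟩, hp, hh, hl⟩ | ⟨⟨h1, h2'⟩, hp, hh, hl⟩ <;>
      have hvne : v ≠ [] := by rintro rfl; simp at hh
    · refine ⟨⟨?_, ?_⟩, ?_, rfl, by rwa [getLast?_cons_of_ne_nil hvne]⟩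
      · simp [List.count_cons, h1]
      · simp [List.count_cons, h2']; omega
      · rw [numPeaks_cons]
        simp [hp]
    · refine ⟨⟨?_, ?_⟩, ?_, rfl, by rwa [getLast?_cons_of_ne_nil hvne]⟩
      · simp [List.count_cons, h1]
      · simp [List.count_cons, h2']; omega
      · rw [numPeaks_cons]
        simp [hp]
lemma eS_ncard (n m j : ℕ) (hn : 1 ≤ n) (hm : 1 ≤ m) (hj : 1 ≤ j) :
    (eS n m j).ncard = (eS n (m - 1) j).ncard + (fS n (m - 1) (j - 1)).ncard := by
  rw [eS_eq n m j hn hm hj, Set.ncard_image_of_injective _ List.cons_injective,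
    Set.ncard_union_eq ?_ (eS_finite ..) (fS_finite ..)]
  rw [Set.disjoint_left]
  rintro w ⟨-, -, hh, -⟩ ⟨-, -, hh', -⟩
  rw [hh] at hh'
  simp at hh'

lemma fS_ncard (n m j : ℕ) (hn : 1 ≤ n) (h2 : 2 ≤ n ∨ 1 ≤ m) :
    (fS n m j).ncard = (eS (n - 1) m j).ncard + (fS (n - 1) m j).ncard := by
  rw [fS_eq n m j hn h2, Set.ncard_image_of_injective _ List.cons_injective,
    Set.ncard_union_eq ?_ (eS_finite ..) (fS_finite ..)]
  rw [Set.disjoint_left]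
  rintro w ⟨-, -, hh, -⟩ ⟨-, -, hh', -⟩
  rw [hh] at hh'
  simp at hh'

lemma main_count : ∀ N n m j : ℕ, n + m ≤ N →
    ((1 ≤ n → 1 ≤ m → 1 ≤ j →
      (eS n m j).ncard = (n - 1).choose (j - 1) * (m - 1).choose (j - 1)) ∧
     (1 ≤ n → (fS n m j).ncard =
       if m = 0 then (if j = 0 then 1 else 0)
       else if 1 ≤ j then (n - 1).choose j * (m - 1).choose (j - 1) else 0)) := by
  intro N
  induction N with
  | zero => intro n m j h; exact ⟨fun hn _ _ => absurd hn (by omega),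
      fun hn => absurd hn (by omega)⟩
  | succ N ih =>
    intro n m j hN
    constructor
    · intro hn hm hj
      rw [eS_ncard n m j hn hm hj]
      by_cases hm1 : m = 1
      · subst hm1
        rw [show (1 : ℕ) - 1 = 0 from rfl, eS_empty_m0, Set.ncard_empty]
        by_cases hj1 : j = 1
        · subst hj1
          rw [show (1 : ℕ) - 1 = 0 from rfl, fS_m0_j0 n hn, Set.ncard_singleton]
          simp
        · rw [fS_m0_jpos n (j - 1) (by omega), Set.ncard_empty,
            Nat.choose_eq_zero_of_lt (show 0 < j - 1 by omega), mul_zero]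
          simp
      · -- m ≥ 2
        obtain ⟨m', rfl⟩ : ∃ m', m = m' + 2 := ⟨m - 2, by omega⟩
        have hE := (ih n (m' + 1) j (by omega)).1 hn (by omega) hj
        have hF := (ih n (m' + 1) (j - 1) (by omega)).2 hn
        rw [show m' + 2 - 1 = m' + 1 from rfl] at *
        rw [show m' + 1 - 1 = m' from rfl] at hE hF
        rw [hE, hF]
        by_cases hj1 : j = 1
        · subst hj1
          simp
        · obtain ⟨j', rfl⟩ : ∃ j', j = j' + 2 := ⟨j - 2, by omega⟩
          rw [show j' + 2 - 1 = j' + 1 from rfl] at *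
          rw [if_neg (by omega), if_pos (by omega), show j' + 1 - 1 = j' from rfl,
            Nat.choose_succ_succ m' j']
          ring
    · intro hn
      by_cases hm0 : m = 0
      · subst hm0
        by_cases hj0 : j = 0
        · subst hj0
          rw [fS_m0_j0 n hn, Set.ncard_singleton]
          simp
        · rw [fS_m0_jpos n j (by omega), Set.ncard_empty]
          simp [hj0]
      · by_cases hn1 : n = 1
        · subst hn1
          rw [fS_eq 1 m j le_rfl (Or.inr (by omega)),
            show (1 : ℕ) - 1 = 0 from rfl, eS_empty_n0, fS_empty_n0, Set.empty_union,
            Set.image_empty, Set.ncard_empty]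
          rw [if_neg hm0]
          by_cases hj0 : j = 0
          · simp [hj0]
          · rw [if_pos (by omega), Nat.choose_eq_zero_of_lt (show (0:ℕ) < j by omega), zero_mul]
        · -- n ≥ 2
          rw [fS_ncard n m j hn (Or.inl (by omega))]
          by_cases hj0 : j = 0
          · subst hj0
            rw [eS_empty_j0 (n - 1) m (by omega), Set.ncard_empty,
              (ih (n - 1) m 0 (by omega)).2 (by omega)]
            simp [hm0]
          · have hE := (ih (n - 1) m j (by omega)).1 (by omega) (by omega) (by omega)
            have hF := (ih (n - 1) m j (by omega)).2 (by omega)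
            rw [hE, hF, if_neg hm0, if_pos (by omega), if_neg hm0, if_pos (by omega)]
            obtain ⟨n', rfl⟩ : ∃ n', n = n' + 2 := ⟨n - 2, by omega⟩
            obtain ⟨j', rfl⟩ : ∃ j', j = j' + 1 := ⟨j - 1, by omega⟩
            simp only [show n' + 2 - 1 - 1 = n' from rfl, show n' + 2 - 1 = n' + 1 from rfl,
              show n' + 1 - 1 = n' from rfl, show j' + 1 - 1 = j' from rfl]
            rw [Nat.choose_succ_succ n' j']
            ring

/-- The number of free `(n,m)`-paths with exactly `j` peaks that begin with an up step
and end with a down step is `C(n−1, j−1)·C(m−1, j−1)`. -/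
theorem stmt11 (n m j : ℕ) (hn : 0 < n) (hm : 0 < m) (hj : 0 < j) :
    {w : List Bool | IsFreePath n m w ∧ numPeaks w = j ∧
        w.head? = some true ∧ w.getLast? = some false}.ncard =
      (n - 1).choose (j - 1) * (m - 1).choose (j - 1) := by
  exact (main_count (n + m) n m j le_rfl).1 hn hm hj
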